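/- In the noisy non-adaptive group testing model with the column statistic T(·) built with constant ψ ≥ 0, for every non-defective item j ∉ S_d the mean of T(j) equals μ_j = M·p·(Γ − ψ·(1−Γ)), and for every defective item i ∈ S_d the mean of T(i) equals μ_i = M·p·(γ0·Γ − ψ·(1−γ0·Γ)). -/

import Mathlib

open MeasureTheory ProbabilityTheory

structure GTModel (Ω : Type) [MeasureSpace Ω] (M N : ℕ) (p u q : ℝ) where
  X : Fin M → Fin N → Ω → Bool
  d : Fin N → Fin M → Ω → Bool
  w : Fin M → Ω → Bool
  measX : ∀ l i, Measurable (X l i)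
  measd : ∀ i l, Measurable (d i l)
  measw : ∀ l, Measurable (w l)
  indep : iIndepFun
      (fun t : (Fin M × Fin N) ⊕ ((Fin N × Fin M) ⊕ Fin M) =>
        Sum.elim (fun li => X li.1 li.2)
          (Sum.elim (fun il => d il.1 il.2) (fun l => w l)) t)
      (ℙ : Measure Ω)
  probX : ∀ l i, (ℙ : Measure Ω) {ω | X l i ω = true} = ENNReal.ofReal p
  probd : ∀ i l, (ℙ : Measure Ω) {ω | d i l ω = true} = ENNReal.ofReal (1 - u)
  probw : ∀ l, (ℙ : Measure Ω) {ω | w l ω = true} = ENNReal.ofReal q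

noncomputable def GTModel.Y {Ω : Type} [MeasureSpace Ω] {M N : ℕ} {p u q : ℝ}
    (G : GTModel Ω M N p u q) (Sd : Finset (Fin N)) (l : Fin M) (ω : Ω) : Bool :=
  (Sd.sup fun i => G.d i l ω && G.X l i ω) || G.w l ω
/-- Column statistic: `T(i) = Σ_l X_{li}(1−Y_l) − ψ Σ_l X_{li} Y_l`. -/
noncomputable def GTModel.T {Ω : Type} [MeasureSpace Ω] {M N : ℕ} {p u q : ℝ}
    (G : GTModel Ω M N p u q) (Sd : Finset (Fin N)) (ψ : ℝ) (i : Fin N) (ω : Ω) : ℝ :=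
  (∑ l : Fin M, (if G.X l i ω then (1 : ℝ) else 0) * (if G.Y Sd l ω then 0 else 1))
    - ψ * ∑ l : Fin M, (if G.X l i ω then (1 : ℝ) else 0) * (if G.Y Sd l ω then 1 else 0)

namespace GTAux

variable {Ω : Type} [MeasureSpace Ω] {M N : ℕ} {p u q : ℝ}

abbrev Idx (M N : ℕ) := (Fin M × Fin N) ⊕ ((Fin N × Fin M) ⊕ Fin M)

/-- The combined family of random variables. -/
def F (G : GTModel Ω M N p u q) : Idx M N → Ω → Bool :=
  fun t => Sum.elim (fun li => G.X li.1 li.2)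
    (Sum.elim (fun il => G.d il.1 il.2) (fun l => G.w l)) t

lemma measF (G : GTModel Ω M N p u q) : ∀ t, Measurable (F G t) := by
  rintro (⟨l, i⟩ | ⟨i, l⟩ | l)
  · exact G.measX l i
  · exact G.measd i l
  · exact G.measw l

lemma indepF (G : GTModel Ω M N p u q) :
    iIndepFun (F G) (ℙ : Measure Ω) := G.indep

/-- comap σ-algebra at a coordinate -/
noncomputable def mco (G : GTModel Ω M N p u q) (t : Idx M N) : MeasurableSpace Ω :=
  MeasurableSpace.comap (F G t) inferInstance

lemma measSet_coord (G : GTModel Ω M N p u q) (t : Idx M N) (B : Set Bool) :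
    MeasurableSet (F G t ⁻¹' B) := measF G t .of_discrete

lemma measSup (G : GTModel Ω M N p u q) {T : Set (Idx M N)} {t : Idx M N} (ht : t ∈ T)
    (B : Set Bool) : MeasurableSet[⨆ t' ∈ T, mco G t'] (F G t ⁻¹' B) := by
  have h1 : MeasurableSet[mco G t] (F G t ⁻¹' B) := ⟨B, .of_discrete, rfl⟩
  have hle : mco G t ≤ ⨆ t' ∈ T, mco G t' := le_iSup₂ (f := fun t' (_ : t' ∈ T) => mco G t') t ht
  exact hle _ h1

lemma probX' (G : GTModel Ω M N p u q) (l : Fin M) (i : Fin N) :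
    (ℙ : Measure Ω) (F G (.inl (l, i)) ⁻¹' {true}) = ENNReal.ofReal p := G.probX l i

lemma probd' (G : GTModel Ω M N p u q) (i : Fin N) (l : Fin M) :
    (ℙ : Measure Ω) (F G (.inr (.inl (i, l))) ⁻¹' {true}) = ENNReal.ofReal (1 - u) := G.probd i l

lemma probw' (G : GTModel Ω M N p u q) (l : Fin M) :
    (ℙ : Measure Ω) (F G (.inr (.inr l)) ⁻¹' {true}) = ENNReal.ofReal q := G.probw l

lemma preimage_false (g : Ω → Bool) : g ⁻¹' {false} = (g ⁻¹' {true})ᶜ := by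
  ext ω; simp

variable [IsProbabilityMeasure (ℙ : Measure Ω)]

lemma one_sub_ofReal {a b : ℝ} (ha : 0 ≤ a) (hb : 0 ≤ b) (h : a + b = 1) :
    1 - ENNReal.ofReal a = ENNReal.ofReal b := by
  rw [← ENNReal.ofReal_one, ← h, ENNReal.ofReal_add ha hb,
    ENNReal.add_sub_cancel_left ENNReal.ofReal_ne_top]

lemma probd_false (G : GTModel Ω M N p u q) (hu0 : 0 ≤ u) (hu1 : u ≤ 1) (i : Fin N) (l : Fin M) :
    (ℙ : Measure Ω) (F G (.inr (.inl (i, l))) ⁻¹' {false}) = ENNReal.ofReal u := by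
  rw [preimage_false, prob_compl_eq_one_sub (measSet_coord G _ _), probd' G i l,
    one_sub_ofReal (b := u) (by linarith) hu0 (by ring)]

lemma probw_false (G : GTModel Ω M N p u q) (hq0 : 0 ≤ q) (hq1 : q ≤ 1) (l : Fin M) :
    (ℙ : Measure Ω) (F G (.inr (.inr l)) ⁻¹' {false}) = ENNReal.ofReal (1 - q) := by
  rw [preimage_false, prob_compl_eq_one_sub (measSet_coord G _ _), probw' G l,
    one_sub_ofReal (b := 1 - q) hq0 (by linarith) (by ring)]

/-- the event that item i' is diluted-active in test l -/
def bad (G : GTModel Ω M N p u q) (l : Fin M) (i' : Fin N) : Set Ω :=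
  F G (.inr (.inl (i', l))) ⁻¹' {true} ∩ F G (.inl (l, i')) ⁻¹' {true}

lemma measSet_bad (G : GTModel Ω M N p u q) (l : Fin M) (i' : Fin N) :
    MeasurableSet (bad G l i') := (measSet_coord G _ _).inter (measSet_coord G _ _)

lemma prob_bad (G : GTModel Ω M N p u q) (hu1 : u ≤ 1) (l : Fin M) (i' : Fin N) :
    (ℙ : Measure Ω) (bad G l i') = ENNReal.ofReal ((1 - u) * p) := by
  have h : IndepFun (F G (.inr (.inl (i', l)))) (F G (.inl (l, i'))) (ℙ : Measure Ω) :=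
    (indepF G).indepFun (by simp)
  rw [bad, h.measure_inter_preimage_eq_mul _ _ .of_discrete .of_discrete, probd' G, probX' G,
    ENNReal.ofReal_mul (by linarith)]

lemma prob_bad_compl (G : GTModel Ω M N p u q) (hp0 : 0 ≤ p) (hp1 : p ≤ 1)
    (hu0 : 0 ≤ u) (hu1 : u ≤ 1) (l : Fin M) (i' : Fin N) :
    (ℙ : Measure Ω) (bad G l i')ᶜ = ENNReal.ofReal (1 - (1 - u) * p) := by
  have h1 : 0 ≤ (1 - u) * p := mul_nonneg (by linarith) hp0
  have h2 : (1 - u) * p ≤ 1 := by nlinarith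
  rw [prob_compl_eq_one_sub (measSet_bad G l i'), prob_bad G hu1 l i',
    one_sub_ofReal (b := 1 - (1 - u) * p) h1 (by linarith) (by ring)]


lemma key (G : GTModel Ω M N p u q) (hp0 : 0 ≤ p) (hp1 : p ≤ 1) (hu0 : 0 ≤ u) (hu1 : u ≤ 1)
    (l : Fin M) (s : Finset (Fin N)) (T : Set (Idx M N))
    (hT : ∀ i' ∈ s, (Sum.inl (l, i') : Idx M N) ∉ T ∧ (Sum.inr (Sum.inl (i', l)) : Idx M N) ∉ T)
    (A : Set Ω) (hA : MeasurableSet[⨆ t ∈ T, mco G t] A) :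
    (ℙ : Measure Ω) (A ∩ ⋂ i' ∈ s, (bad G l i')ᶜ)
      = (ℙ : Measure Ω) A * ENNReal.ofReal (1 - (1 - u) * p) ^ s.card := by
  classical
  induction s using Finset.induction with
  | empty => simp
  | @insert a s ha ih =>
    have hTa := hT a (Finset.mem_insert_self a s)
    have hT' : ∀ i' ∈ s, (Sum.inl (l, i') : Idx M N) ∉ T ∧
        (Sum.inr (Sum.inl (i', l)) : Idx M N) ∉ T :=
      fun i' hi' => hT i' (Finset.mem_insert_of_mem hi')
    set pairSet : Set (Idx M N) := {Sum.inl (l, a), Sum.inr (Sum.inl (a, l))} with hpair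
    set coords : Set (Idx M N) :=
      T ∪ (⋃ i' ∈ (s : Set (Fin N)), {Sum.inl (l, i'), Sum.inr (Sum.inl (i', l))}) with hcoords
    have hdisj : Disjoint pairSet coords := by
      rw [Set.disjoint_left]
      rintro t (rfl | rfl)
      · rintro (hmem | hmem)
        · exact hTa.1 hmem
        · simp only [Set.mem_iUnion, Set.mem_insert_iff, Set.mem_singleton_iff] at hmem
          obtain ⟨i', hi', (h | h)⟩ := hmem
          · rw [Sum.inl.injEq, Prod.mk.injEq] at h
            exact ha (h.2 ▸ hi')
          · exact absurd h (by simp)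
      · rintro (hmem | hmem)
        · exact hTa.2 hmem
        · simp only [Set.mem_iUnion, Set.mem_insert_iff, Set.mem_singleton_iff] at hmem
          obtain ⟨i', hi', (h | h)⟩ := hmem
          · exact absurd h (by simp)
          · rw [Sum.inr.injEq, Sum.inl.injEq, Prod.mk.injEq] at h
            exact ha (h.1 ▸ hi')
    have hindep : Indep (⨆ t ∈ pairSet, mco G t) (⨆ t ∈ coords, mco G t) (ℙ : Measure Ω) :=
      indep_iSup_of_disjoint (fun t => (measF G t).comap_le) (indepF G).iIndep hdisj
    have hbadc : MeasurableSet[⨆ t ∈ pairSet, mco G t] (bad G l a)ᶜ := by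
      refine MeasurableSet.compl ?_
      exact (measSup G (by simp [hpair]) _).inter (measSup G (by simp [hpair]) _)
    have hArest : MeasurableSet[⨆ t ∈ coords, mco G t] (A ∩ ⋂ i' ∈ s, (bad G l i')ᶜ) := by
      refine MeasurableSet.inter ?_ ?_
      · have hle : (⨆ t ∈ T, mco G t) ≤ ⨆ t ∈ coords, mco G t :=
          biSup_mono Set.subset_union_left
        exact hle _ hA
      · refine MeasurableSet.biInter (s.countable_toSet) (fun i' hi' => ?_)
        refine MeasurableSet.compl ?_
        have h1 : (Sum.inr (Sum.inl (i', l)) : Idx M N) ∈ coords := by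
          rw [hcoords]; right
          exact Set.mem_biUnion hi' (by simp)
        have h2 : (Sum.inl (l, i') : Idx M N) ∈ coords := by
          rw [hcoords]; right
          exact Set.mem_biUnion hi' (by simp)
        exact (measSup G h1 _).inter (measSup G h2 _)
    have hrw : A ∩ ⋂ i' ∈ insert a s, (bad G l i')ᶜ
        = (bad G l a)ᶜ ∩ (A ∩ ⋂ i' ∈ s, (bad G l i')ᶜ) := by
      rw [Finset.set_biInter_insert, Set.inter_left_comm]
    rw [hrw, (Indep_iff _ _ _).1 hindep _ _ hbadc hArest,
      prob_bad_compl G hp0 hp1 hu0 hu1 l a, ih hT',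
      Finset.card_insert_of_notMem ha, pow_succ]
    ring

/-- The event `{X_{li} = 1, Y_l = 0}`. -/
def E0 (G : GTModel Ω M N p u q) (Sd : Finset (Fin N)) (l : Fin M) (i : Fin N) : Set Ω :=
  {ω | G.X l i ω = true ∧ G.Y Sd l ω = false}

lemma Yfalse_eq (G : GTModel Ω M N p u q) (Sd : Finset (Fin N)) (l : Fin M) :
    {ω | G.Y Sd l ω = false}
      = F G (.inr (.inr l)) ⁻¹' {false} ∩ ⋂ i' ∈ Sd, (bad G l i')ᶜ := by
  ext ω
  simp only [GTModel.Y, Set.mem_setOf_eq, Bool.or_eq_false_iff, Set.mem_inter_iff,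
    Set.mem_preimage, Set.mem_singleton_iff, Set.mem_iInter, Set.mem_compl_iff, bad,
    Set.mem_inter_iff, Set.mem_preimage, Set.mem_singleton_iff, F, Sum.elim_inl, Sum.elim_inr]
  rw [show (false : Bool) = ⊥ from rfl, Finset.sup_eq_bot_iff]
  constructor
  · rintro ⟨h1, h2⟩
    refine ⟨h2, fun i' hi' => ?_⟩
    have := h1 i' hi'
    simp only [show (⊥ : Bool) = false from rfl, Bool.and_eq_false_iff] at this
    rcases this with h | h <;> simp [h]
  · rintro ⟨h2, h1⟩
    refine ⟨fun i' hi' => ?_, h2⟩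
    have := h1 i' hi'
    simp only [show (⊥ : Bool) = false from rfl, Bool.and_eq_false_iff]
    by_cases hd : G.d i' l ω = true
    · right
      by_contra hx
      exact this ⟨hd, by simpa using hx⟩
    · left; simpa using hd

lemma measSet_Yfalse (G : GTModel Ω M N p u q) (Sd : Finset (Fin N)) (l : Fin M) :
    MeasurableSet {ω | G.Y Sd l ω = false} := by
  rw [Yfalse_eq]
  exact (measSet_coord G _ _).inter
    (MeasurableSet.biInter Sd.countable_toSet fun i' _ => (measSet_bad G l i').compl)

lemma measSet_E0 (G : GTModel Ω M N p u q) (Sd : Finset (Fin N)) (l : Fin M) (i : Fin N) :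
    MeasurableSet (E0 G Sd l i) := by
  have : E0 G Sd l i = G.X l i ⁻¹' {true} ∩ {ω | G.Y Sd l ω = false} := rfl
  rw [this]
  exact (G.measX l i (.of_discrete : MeasurableSet {true})).inter (measSet_Yfalse G Sd l)

lemma prob_E0_nondef (G : GTModel Ω M N p u q) (hp0 : 0 ≤ p) (hp1 : p ≤ 1) (hu0 : 0 ≤ u)
    (hu1 : u ≤ 1) (hq0 : 0 ≤ q) (hq1 : q ≤ 1) (Sd : Finset (Fin N)) (l : Fin M)
    (j : Fin N) (hj : j ∉ Sd) :
    (ℙ : Measure Ω) (E0 G Sd l j)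
      = ENNReal.ofReal (p * ((1 - q) * (1 - (1 - u) * p) ^ Sd.card)) := by
  have hE : E0 G Sd l j
      = (F G (.inl (l, j)) ⁻¹' {true} ∩ F G (.inr (.inr l)) ⁻¹' {false})
        ∩ ⋂ i' ∈ Sd, (bad G l i')ᶜ := by
    have : E0 G Sd l j = {ω | G.X l j ω = true} ∩ {ω | G.Y Sd l ω = false} := rfl
    rw [this, Yfalse_eq, ← Set.inter_assoc]
    rfl
  set T : Set (Idx M N) := {Sum.inl (l, j), Sum.inr (Sum.inr l)} with hTdef
  have hT : ∀ i' ∈ Sd, (Sum.inl (l, i') : Idx M N) ∉ T ∧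
      (Sum.inr (Sum.inl (i', l)) : Idx M N) ∉ T := by
    intro i' hi'
    constructor
    · simp only [hTdef, Set.mem_insert_iff, Set.mem_singleton_iff, Sum.inl.injEq,
        Prod.mk.injEq, not_or]
      exact ⟨fun h => hj (h.2 ▸ hi'), by simp⟩
    · simp [hTdef]
  have hA : MeasurableSet[⨆ t ∈ T, mco G t]
      (F G (.inl (l, j)) ⁻¹' {true} ∩ F G (.inr (.inr l)) ⁻¹' {false}) :=
    (measSup G (by simp [hTdef]) _).inter (measSup G (by simp [hTdef]) _)
  rw [hE, key G hp0 hp1 hu0 hu1 l Sd T hT _ hA]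
  have hpair : IndepFun (F G (.inl (l, j))) (F G (.inr (.inr l))) (ℙ : Measure Ω) :=
    (indepF G).indepFun (by simp)
  rw [hpair.measure_inter_preimage_eq_mul _ _ .of_discrete .of_discrete,
    probX' G, probw_false G hq0 hq1]
  have h1 : 0 ≤ (1 - u) * p := mul_nonneg (by linarith) hp0
  have h2 : (1 - u) * p ≤ 1 := by nlinarith
  have h3 : (0:ℝ) ≤ 1 - (1 - u) * p := by linarith
  rw [← ENNReal.ofReal_mul hp0, ← ENNReal.ofReal_pow h3,
    ← ENNReal.ofReal_mul (mul_nonneg hp0 (by linarith))]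
  congr 1
  ring

lemma prob_E0_def (G : GTModel Ω M N p u q) (hp0 : 0 ≤ p) (hp1 : p ≤ 1) (hu0 : 0 ≤ u)
    (hu1 : u ≤ 1) (hq0 : 0 ≤ q) (hq1 : q ≤ 1) (Sd : Finset (Fin N)) (l : Fin M)
    (i : Fin N) (hi : i ∈ Sd) :
    (ℙ : Measure Ω) (E0 G Sd l i)
      = ENNReal.ofReal (p * (u * (1 - q) * (1 - (1 - u) * p) ^ (Sd.card - 1))) := by
  classical
  have hE : E0 G Sd l i
      = ((F G (.inl (l, i)) ⁻¹' {true} ∩ F G (.inr (.inl (i, l))) ⁻¹' {false})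
          ∩ F G (.inr (.inr l)) ⁻¹' {false})
        ∩ ⋂ i' ∈ Sd.erase i, (bad G l i')ᶜ := by
    have h0 : E0 G Sd l i = {ω | G.X l i ω = true} ∩ {ω | G.Y Sd l ω = false} := rfl
    rw [h0, Yfalse_eq]
    have hins : ⋂ i' ∈ Sd, (bad G l i')ᶜ
        = (bad G l i)ᶜ ∩ ⋂ i' ∈ Sd.erase i, (bad G l i')ᶜ := by
      conv_lhs => rw [← Finset.insert_erase hi]
      rw [Finset.set_biInter_insert]
    rw [hins]
    ext ω
    simp only [Set.mem_inter_iff, Set.mem_setOf_eq, Set.mem_preimage, Set.mem_singleton_iff,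
      Set.mem_compl_iff, bad, Set.mem_inter_iff, Set.mem_preimage, Set.mem_singleton_iff,
      F, Sum.elim_inl, Sum.elim_inr]
    constructor
    · rintro ⟨hX, hw, hbi, hrest⟩
      refine ⟨⟨⟨hX, ?_⟩, hw⟩, hrest⟩
      by_contra hd
      exact hbi ⟨by simpa using hd, hX⟩
    · rintro ⟨⟨⟨hX, hd⟩, hw⟩, hrest⟩
      refine ⟨hX, hw, ?_, hrest⟩
      rintro ⟨hd', _⟩
      rw [hd] at hd'
      exact absurd hd' (by simp)
  set T : Set (Idx M N) := {Sum.inl (l, i), Sum.inr (Sum.inl (i, l)), Sum.inr (Sum.inr l)}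
    with hTdef
  have hT : ∀ i' ∈ Sd.erase i, (Sum.inl (l, i') : Idx M N) ∉ T ∧
      (Sum.inr (Sum.inl (i', l)) : Idx M N) ∉ T := by
    intro i' hi'
    have hne : i' ≠ i := Finset.ne_of_mem_erase hi'
    constructor
    · simp only [hTdef, Set.mem_insert_iff, Set.mem_singleton_iff, Sum.inl.injEq,
        Prod.mk.injEq, not_or]
      exact ⟨fun h => hne h.2, by simp, by simp⟩
    · simp only [hTdef, Set.mem_insert_iff, Set.mem_singleton_iff, Sum.inr.injEq,
        Sum.inl.injEq, Prod.mk.injEq, not_or]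
      exact ⟨by simp, fun h => hne h.1, by simp⟩
  have hA : MeasurableSet[⨆ t ∈ T, mco G t]
      ((F G (.inl (l, i)) ⁻¹' {true} ∩ F G (.inr (.inl (i, l))) ⁻¹' {false})
        ∩ F G (.inr (.inr l)) ⁻¹' {false}) :=
    ((measSup G (by simp [hTdef]) _).inter (measSup G (by simp [hTdef]) _)).inter
      (measSup G (by simp [hTdef]) _)
  rw [hE, key G hp0 hp1 hu0 hu1 l (Sd.erase i) T hT _ hA]
  -- now the probability of the triple intersection
  have hS : ((ℙ : Measure Ω)) ((F G (.inl (l, i)) ⁻¹' {true} ∩ F G (.inr (.inl (i, l))) ⁻¹' {false})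
        ∩ F G (.inr (.inr l)) ⁻¹' {false})
      = ENNReal.ofReal p * (ENNReal.ofReal u * ENNReal.ofReal (1 - q)) := by
    set Bset : Idx M N → Set Bool := fun t => match t with
      | .inl _ => {true}
      | .inr _ => {false} with hB
    set Sfin : Finset (Idx M N) :=
      {Sum.inl (l, i), Sum.inr (Sum.inl (i, l)), Sum.inr (Sum.inr l)} with hSfin
    have hmb := (indepF G).meas_biInter (S := Sfin) (s := fun t => F G t ⁻¹' Bset t)
      (fun t _ => ⟨Bset t, .of_discrete, rfl⟩)
    have hset : (⋂ t ∈ Sfin, F G t ⁻¹' Bset t)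
        = ((F G (.inl (l, i)) ⁻¹' {true} ∩ F G (.inr (.inl (i, l))) ⁻¹' {false})
          ∩ F G (.inr (.inr l)) ⁻¹' {false}) := by
      rw [hSfin, Finset.set_biInter_insert, Finset.set_biInter_insert,
        Finset.set_biInter_singleton, ← Set.inter_assoc]
    rw [← hset, hmb, hSfin]
    rw [Finset.prod_insert (by simp), Finset.prod_insert (by simp), Finset.prod_singleton]
    show (ℙ : Measure Ω) (F G (.inl (l, i)) ⁻¹' {true})
        * ((ℙ : Measure Ω) (F G (.inr (.inl (i, l))) ⁻¹' {false})
          * (ℙ : Measure Ω) (F G (.inr (.inr l)) ⁻¹' {false})) = _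
    rw [probX' G, probd_false G hu0 hu1, probw_false G hq0 hq1]
  rw [hS, Finset.card_erase_of_mem hi]
  have h1 : 0 ≤ (1 - u) * p := mul_nonneg (by linarith) hp0
  have h2 : (1 - u) * p ≤ 1 := by nlinarith
  have h3 : (0:ℝ) ≤ 1 - (1 - u) * p := by linarith
  rw [← ENNReal.ofReal_mul hu0,
    ← ENNReal.ofReal_mul hp0, ← ENNReal.ofReal_pow h3,
    ← ENNReal.ofReal_mul (mul_nonneg hp0 (mul_nonneg hu0 (by linarith)))]
  congr 1
  ring

lemma integral_T_eq (G : GTModel Ω M N p u q) (hp0 : 0 ≤ p)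
    (Sd : Finset (Fin N)) (ψ : ℝ) (i : Fin N) (r : ℝ) (hr0 : 0 ≤ r) (hrp : r ≤ p)
    (hprob : ∀ l : Fin M, (ℙ : Measure Ω) (E0 G Sd l i) = ENNReal.ofReal r) :
    ∫ ω, G.T Sd ψ i ω ∂(ℙ : Measure Ω) = M * (r - ψ * (p - r)) := by
  classical
  set S1 : Fin M → Set Ω := fun l => {ω | G.X l i ω = true ∧ G.Y Sd l ω = true} with hS1
  have measS1 : ∀ l, MeasurableSet (S1 l) := by
    intro l
    have : S1 l = G.X l i ⁻¹' {true} ∩ {ω | G.Y Sd l ω = false}ᶜ := by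
      ext ω; simp [hS1]
    rw [this]
    exact (G.measX l i (.of_discrete : MeasurableSet {true})).inter
      (measSet_Yfalse G Sd l).compl
  have hg : ∀ l, (fun ω => (if G.X l i ω then (1:ℝ) else 0) * (if G.Y Sd l ω then 0 else 1))
      = (E0 G Sd l i).indicator (1 : Ω → ℝ) := by
    intro l; funext ω
    rcases hX : G.X l i ω <;> rcases hY : G.Y Sd l ω <;>
      simp [Set.indicator_apply, E0, hX, hY]
  have hh : ∀ l, (fun ω => (if G.X l i ω then (1:ℝ) else 0) * (if G.Y Sd l ω then 1 else 0))
      = (S1 l).indicator (1 : Ω → ℝ) := by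
    intro l; funext ω
    rcases hX : G.X l i ω <;> rcases hY : G.Y Sd l ω <;>
      simp [Set.indicator_apply, hS1, hX, hY]
  have hfun : G.T Sd ψ i = fun ω =>
      (∑ l : Fin M, (E0 G Sd l i).indicator (1 : Ω → ℝ) ω)
        - ψ * ∑ l : Fin M, (S1 l).indicator (1 : Ω → ℝ) ω := by
    funext ω
    simp only [GTModel.T]
    congr 1
    · exact Finset.sum_congr rfl fun l _ => congrFun (hg l) ω
    · congr 1
      exact Finset.sum_congr rfl fun l _ => congrFun (hh l) ω
  have hint0 : ∀ l : Fin M, Integrable ((E0 G Sd l i).indicator (1 : Ω → ℝ))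
      (ℙ : Measure Ω) := fun l => (integrable_const 1).indicator (measSet_E0 G Sd l i)
  have hint1 : ∀ l : Fin M, Integrable ((S1 l).indicator (1 : Ω → ℝ))
      (ℙ : Measure Ω) := fun l => (integrable_const 1).indicator (measS1 l)
  have hintsum0 : Integrable (fun ω => ∑ l : Fin M, (E0 G Sd l i).indicator (1 : Ω → ℝ) ω)
      (ℙ : Measure Ω) := integrable_finset_sum _ fun l _ => hint0 l
  have hintsum1 : Integrable (fun ω => ∑ l : Fin M, (S1 l).indicator (1 : Ω → ℝ) ω)
      (ℙ : Measure Ω) := integrable_finset_sum _ fun l _ => hint1 l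
  rw [hfun, integral_sub hintsum0 (hintsum1.const_mul ψ), integral_const_mul,
    integral_finset_sum _ (fun l _ => hint0 l), integral_finset_sum _ (fun l _ => hint1 l)]
  have hP1 : ∀ l : Fin M, (ℙ : Measure Ω) (S1 l) = ENNReal.ofReal (p - r) := by
    intro l
    have hdisjoint : Disjoint (E0 G Sd l i) (S1 l) := by
      rw [Set.disjoint_left]
      rintro ω ⟨_, h0⟩ ⟨_, h1⟩
      rw [h0] at h1
      exact absurd h1 (by simp)
    have hunion : E0 G Sd l i ∪ S1 l = {ω | G.X l i ω = true} := by
      ext ω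
      rcases hY : G.Y Sd l ω <;> simp [E0, hS1, hY]
    have hadd := measure_union (μ := (ℙ : Measure Ω)) hdisjoint (measS1 l)
    rw [hunion, G.probX l i, hprob l] at hadd
    have hsplit : ENNReal.ofReal p = ENNReal.ofReal r + ENNReal.ofReal (p - r) := by
      rw [← ENNReal.ofReal_add hr0 (by linarith)]
      norm_num
    rw [hsplit] at hadd
    exact (ENNReal.add_right_inj ENNReal.ofReal_ne_top).1 hadd.symm
  have h0 : ∀ l : Fin M, ∫ ω, (E0 G Sd l i).indicator (1 : Ω → ℝ) ω ∂(ℙ : Measure Ω)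
      = r := by
    intro l
    rw [integral_indicator_one (measSet_E0 G Sd l i), measureReal_def, hprob l, ENNReal.toReal_ofReal hr0]
  have h1 : ∀ l : Fin M, ∫ ω, (S1 l).indicator (1 : Ω → ℝ) ω ∂(ℙ : Measure Ω)
      = p - r := by
    intro l
    rw [integral_indicator_one (measS1 l), measureReal_def, hP1 l, ENNReal.toReal_ofReal (by linarith)]
  rw [Finset.sum_congr rfl fun l _ => h0 l, Finset.sum_congr rfl fun l _ => h1 l,
    Finset.sum_const, Finset.sum_const, Finset.card_univ, Fintype.card_fin,
    nsmul_eq_mul, nsmul_eq_mul]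
  ring

end GTAux

open GTAux in
theorem stmt_4 {Ω : Type} [MeasureSpace Ω] [IsProbabilityMeasure (ℙ : Measure Ω)]
    (M N K : ℕ) (hN : 2 ≤ N) (hK1 : 1 ≤ K) (hKN : K < N) (hM : 1 ≤ M)
    (p u q : ℝ) (hp : 0 < p) (hp1 : p < 1) (hu0 : 0 ≤ u) (hu1 : u < 1)
    (hq0 : 0 ≤ q) (hq1 : q < 1)
    (Sd : Finset (Fin N)) (hSd : Sd.card = K)
    (G : GTModel Ω M N p u q) (ψ : ℝ) (hψ : 0 ≤ ψ) :
    (∀ j : Fin N, j ∉ Sd →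
      ∫ ω, G.T Sd ψ j ω ∂(ℙ : Measure Ω)
        = M * p * ((1 - q) * (1 - (1 - u) * p) ^ K
            - ψ * (1 - (1 - q) * (1 - (1 - u) * p) ^ K)))
    ∧ (∀ i : Fin N, i ∈ Sd →
      ∫ ω, G.T Sd ψ i ω ∂(ℙ : Measure Ω)
        = M * p * ((u / (1 - (1 - u) * p)) * ((1 - q) * (1 - (1 - u) * p) ^ K)
            - ψ * (1 - (u / (1 - (1 - u) * p)) * ((1 - q) * (1 - (1 - u) * p) ^ K)))) := by
  have hp0 : (0:ℝ) ≤ p := le_of_lt hp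
  have hp1' : p ≤ 1 := le_of_lt hp1
  have hu1' : u ≤ 1 := le_of_lt hu1
  have hq1' : q ≤ 1 := le_of_lt hq1
  have hup0 : 0 ≤ (1 - u) * p := mul_nonneg (by linarith) hp0
  have hup1 : (1 - u) * p < 1 := by nlinarith
  have hx0 : (0:ℝ) < 1 - (1 - u) * p := by linarith
  have hx0' : (0:ℝ) ≤ 1 - (1 - u) * p := le_of_lt hx0
  have hx1 : (1:ℝ) - (1 - u) * p ≤ 1 := by linarith
  constructor
  · intro j hj
    set Γ : ℝ := (1 - q) * (1 - (1 - u) * p) ^ K with hΓ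
    have hΓ0 : 0 ≤ Γ := mul_nonneg (by linarith) (pow_nonneg hx0' K)
    have hΓ1 : Γ ≤ 1 := by
      have hpow : (1 - (1 - u) * p) ^ K ≤ 1 := pow_le_one₀ hx0' hx1
      nlinarith
    have hr0 : 0 ≤ p * Γ := mul_nonneg hp0 hΓ0
    have hrp : p * Γ ≤ p := mul_le_of_le_one_right hp0 hΓ1
    have hprob : ∀ l : Fin M, (ℙ : Measure Ω) (E0 G Sd l j) = ENNReal.ofReal (p * Γ) := by
      intro l
      rw [prob_E0_nondef G hp0 hp1' hu0 hu1' hq0 hq1' Sd l j hj, hSd]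
    rw [integral_T_eq G hp0 Sd ψ j (p * Γ) hr0 hrp hprob]
    ring
  · intro i hi
    set x : ℝ := 1 - (1 - u) * p with hxdef
    set c : ℝ := u * (1 - q) * x ^ (K - 1) with hc
    have hxK : x ^ K = x ^ (K - 1) * x := by
      rw [← pow_succ]
      congr 1
      omega
    have hγ : (u / x) * ((1 - q) * x ^ K) = c := by
      rw [hxK, hc]
      field_simp
    have hc0 : 0 ≤ c := by
      apply mul_nonneg (mul_nonneg hu0 (by linarith)) (pow_nonneg hx0' _)
    have hc1 : c ≤ 1 := by
      have hpow : x ^ (K - 1) ≤ 1 := pow_le_one₀ hx0' hx1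
      have : u * (1 - q) ≤ 1 := by nlinarith
      nlinarith [mul_nonneg hu0 (by linarith : (0:ℝ) ≤ 1 - q)]
    have hr0 : 0 ≤ p * c := mul_nonneg hp0 hc0
    have hrp : p * c ≤ p := mul_le_of_le_one_right hp0 hc1
    have hprob : ∀ l : Fin M, (ℙ : Measure Ω) (E0 G Sd l i) = ENNReal.ofReal (p * c) := by
      intro l
      rw [prob_E0_def G hp0 hp1' hu0 hu1' hq0 hq1' Sd l i hi, hSd]
    rw [integral_T_eq G hp0 Sd ψ i (p * c) hr0 hrp hprob, hγ]
    ring
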